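/- Let μ : ℝ^n → ℝ^p be differentiable with entrywise Jacobian bounds J̲^μ ≤ J_μ(x) ≤ J̄^μ for all x, and suppose each Jacobian entry has constant sign. Let μ_d be the tight decomposition function defined coordinatewise by μ_{d,i}(z₁,z₂) = μ_i(D^i z₁ + (I − D^i) z₂) with D^i = diag(max(sgn(J̄^μ_i), 0)). Then for any interval [z̲, z̄] ⊆ ℝ^n, μ_d(z̄, z̲) − μ_d(z̲, z̄) ≤ F_μ (z̄ − z̲) componentwise, where F_μ = (J̄^μ)⁺ + (J̲^μ)⁻. -/

import Mathlib

open Matrix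

theorem stmt_5 {n p : ℕ} (μ : (Fin n → ℝ) → (Fin p → ℝ))
    (hdiff : Differentiable ℝ μ)
    (Jl Ju : Matrix (Fin p) (Fin n) ℝ)
    (hJl : ∀ x i j, Jl i j ≤ fderiv ℝ μ x (Pi.single j 1) i)
    (hJu : ∀ x i j, fderiv ℝ μ x (Pi.single j 1) i ≤ Ju i j)
    (hsign : ∀ i j, (∀ x, 0 ≤ fderiv ℝ μ x (Pi.single j 1) i) ∨
                    (∀ x, fderiv ℝ μ x (Pi.single j 1) i ≤ 0))
    (μd : (Fin n → ℝ) → (Fin n → ℝ) → (Fin p → ℝ))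
    (hμd : ∀ z₁ z₂ i, μd z₁ z₂ i = μ (fun j => if 0 ≤ Ju i j then z₁ j else z₂ j) i)
    (F : Matrix (Fin p) (Fin n) ℝ)
    (hF : ∀ i j, F i j = max (Ju i j) 0 + max (-(Jl i j)) 0)
    (zl zu : Fin n → ℝ) (hz : zl ≤ zu) :
    μd zu zl - μd zl zu ≤ F.mulVec (zu - zl) := by
  intro i
  set d : Fin n → ℝ := fun j => if 0 ≤ Ju i j then zu j - zl j else zl j - zu j with hd
  set a : Fin n → ℝ := fun j => if 0 ≤ Ju i j then zl j else zu j with ha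
  set C : ℝ := ∑ j, F i j * (zu j - zl j) with hCdef
  have hC : ∀ x : Fin n → ℝ, fderiv ℝ μ x d i ≤ C := by
    intro x
    have hexp : fderiv ℝ μ x d i = ∑ j, d j * fderiv ℝ μ x (Pi.single j 1) i := by
      have hdsum : d = ∑ j, d j • (Pi.single j 1 : Fin n → ℝ) := by
        conv_lhs => rw [pi_eq_sum_univ d]
        refine Finset.sum_congr rfl fun j _ => ?_
        congr 1
        funext k
        simp [Pi.single_apply, eq_comm]
      conv_lhs => rw [hdsum]
      rw [map_sum, Finset.sum_apply]
      refine Finset.sum_congr rfl fun j _ => ?_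
      rw [ContinuousLinearMap.map_smul]
      simp [smul_eq_mul]
    rw [hexp]
    refine Finset.sum_le_sum fun j _ => ?_
    have hzj : 0 ≤ zu j - zl j := sub_nonneg.mpr (hz j)
    have h1 : (0:ℝ) ≤ max (Ju i j) 0 := le_max_right _ _
    have h2 : (0:ℝ) ≤ max (-(Jl i j)) 0 := le_max_right _ _
    by_cases hcase : 0 ≤ Ju i j
    · simp only [hd, hcase, if_pos]
      calc (zu j - zl j) * fderiv ℝ μ x (Pi.single j 1) i
          ≤ (zu j - zl j) * max (Ju i j) 0 :=
            mul_le_mul_of_nonneg_left (le_trans (hJu x i j) (le_max_left _ _)) hzj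
        _ ≤ F i j * (zu j - zl j) := by
            rw [hF i j]; nlinarith
    · simp only [hd, hcase, if_neg, not_false_iff]
      calc (zl j - zu j) * fderiv ℝ μ x (Pi.single j 1) i
          ≤ (zl j - zu j) * Jl i j := by
            have := hJl x i j
            nlinarith
        _ ≤ (zu j - zl j) * max (-(Jl i j)) 0 := by
            nlinarith [le_max_left (-(Jl i j)) (0:ℝ)]
        _ ≤ F i j * (zu j - zl j) := by
            rw [hF i j]; nlinarith
  have hline : ∀ t : ℝ, HasDerivAt (fun t : ℝ => a + t • d) d t := by
    intro t
    have := ((hasDerivAt_id t).smul_const d).const_add a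
    simpa using this
  have hg : ∀ t : ℝ, HasDerivAt (fun t : ℝ => μ (a + t • d) i)
      (fderiv ℝ μ (a + t • d) d i) t := by
    intro t
    have h1 : HasDerivAt (fun t : ℝ => μ (a + t • d)) (fderiv ℝ μ (a + t • d) d) t :=
      (hdiff (a + t • d)).hasFDerivAt.comp_hasDerivAt t (hline t)
    have h2 := (ContinuousLinearMap.proj (R := ℝ) (φ := fun _ : Fin p => ℝ)
      i).hasFDerivAt.comp_hasDerivAt t h1
    exact h2
  -- monotonicity of t ↦ C * t - μ(a + t d) i
  have hmono : Monotone (fun t : ℝ => C * t - μ (a + t • d) i) := by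
    have hdiffh : ∀ t : ℝ, HasDerivAt (fun t : ℝ => C * t - μ (a + t • d) i)
        (C - fderiv ℝ μ (a + t • d) d i) t := by
      intro t
      have h := ((hasDerivAt_id t).const_mul C).sub (hg t)
      simp only [mul_one] at h
      exact h
    have hdifferentiable : Differentiable ℝ (fun t : ℝ => C * t - μ (a + t • d) i) :=
      fun t => (hdiffh t).differentiableAt
    refine monotone_of_deriv_nonneg hdifferentiable fun t => ?_
    rw [(hdiffh t).deriv]
    have := hC (a + t • d)
    linarith
  have hkey : μ (a + (1:ℝ) • d) i - μ (a + (0:ℝ) • d) i ≤ C := by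
    have := hmono (show (0:ℝ) ≤ 1 by norm_num)
    simp only at this
    linarith
  have e1 : a + (1:ℝ) • d = fun j => if 0 ≤ Ju i j then zu j else zl j := by
    funext j
    by_cases hcase : 0 ≤ Ju i j <;> simp [ha, hd, hcase] <;> ring
  have e2 : a + (0:ℝ) • d = fun j => if 0 ≤ Ju i j then zl j else zu j := by
    funext j
    by_cases hcase : 0 ≤ Ju i j <;> simp [ha, hd, hcase]
  rw [e1, e2] at hkey
  have hmv : F.mulVec (zu - zl) i = C := by
    simp [Matrix.mulVec, dotProduct, hCdef, Pi.sub_apply]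
  rw [Pi.sub_apply, hμd, hμd, hmv]
  exact hkey
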